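/- Let f_n: {0,1}^{m_n} → {-1,1} with spectral samples S_n, and suppose I(f_n) ≥ c n^ρ for constants c, ρ > 0. Assume that for every γ > 0 there is δ > 0 such that for all n, P(|S_n| < δ E[|S_n|] and S_n ≠ ∅) < γ. Then for every α < ρ and ε_n = n^{-α}, E[f_n(ω)f_n(ω_{ε_n})] - E[f_n(ω)]^2 → 0 as n → ∞. -/
import Mathlib


open Finset

noncomputable def expect {n : ℕ} (f : (Fin n → Bool) → ℝ) : ℝ :=
  (∑ ω : Fin n → Bool, f ω) / 2 ^ n

noncomputable def walsh {n : ℕ} (S : Finset (Fin n)) (ω : Fin n → Bool) : ℝ :=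
  ∏ i ∈ S, (if ω i then -1 else 1)

noncomputable def walshCoeff {n : ℕ} (f : (Fin n → Bool) → ℝ) (S : Finset (Fin n)) : ℝ :=
  expect (fun ω => f ω * walsh S ω)

noncomputable def noiseKernel {n : ℕ} (ε : ℝ) (ω ω' : Fin n → Bool) : ℝ :=
  ∏ i, (if ω i = ω' i then 1 - ε / 2 else ε / 2)

noncomputable def noiseE {n : ℕ} (ε : ℝ) (f g : (Fin n → Bool) → ℝ) : ℝ :=
  (∑ ω : Fin n → Bool, ∑ ω' : Fin n → Bool, noiseKernel ε ω ω' * f ω * g ω') / 2 ^ n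

noncomputable def noiseP {n : ℕ} (ε : ℝ) (f : (Fin n → Bool) → ℝ) : ℝ :=
  (∑ ω : Fin n → Bool, ∑ ω' : Fin n → Bool,
    noiseKernel ε ω ω' * (if f ω = f ω' then 0 else 1)) / 2 ^ n

noncomputable def influence {n : ℕ} (f : (Fin n → Bool) → ℝ) (i : Fin n) : ℝ :=
  expect (fun ω => if f ω = f (Function.update ω i (!ω i)) then 0 else 1)

noncomputable def totalInfluence {n : ℕ} (f : (Fin n → Bool) → ℝ) : ℝ :=
  ∑ i, influence f i


lemma sum_pi_bool {n : ℕ} (g : Fin n → Bool → ℝ) :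
    ∑ ω : Fin n → Bool, ∏ i, g i (ω i) = ∏ i, (g i true + g i false) := by
  rw [← Fintype.prod_sum (fun (i : Fin n) (b : Bool) => g i b)]
  exact Finset.prod_congr rfl fun i _ => by simp [Fintype.sum_bool]

lemma walsh_dual {n : ℕ} (ω ω' : Fin n → Bool) :
    ∑ S : Finset (Fin n), walsh S ω * walsh S ω' =
      if ω = ω' then (2:ℝ)^n else 0 := by
  have h1 : ∀ S : Finset (Fin n), walsh S ω * walsh S ω'
      = (∏ i ∈ S, ((if ω i then (-1:ℝ) else 1) * (if ω' i then -1 else 1))) * ∏ i ∈ Sᶜ, (1:ℝ) := by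
    intro S; rw [walsh, walsh, ← Finset.prod_mul_distrib, Finset.prod_const_one, mul_one]
  simp_rw [h1]
  rw [← Fintype.prod_add]
  by_cases h : ω = ω'
  · subst h
    rw [if_pos rfl,
      Finset.prod_congr rfl (fun i _ => show _ = (2:ℝ) by by_cases hi : ω i <;> simp [hi] <;> ring),
      Finset.prod_const]
    simp
  · obtain ⟨i, hi⟩ : ∃ i, ω i ≠ ω' i := by
      by_contra hc; push_neg at hc; exact h (funext hc)
    rw [Finset.prod_eq_zero (Finset.mem_univ i), if_neg h]
    by_cases h1 : ω i <;> by_cases h2 : ω' i <;> simp_all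


lemma fourier_inversion {n : ℕ} (f : (Fin n → Bool) → ℝ) (ω : Fin n → Bool) :
    ∑ S : Finset (Fin n), walshCoeff f S * walsh S ω = f ω := by
  unfold walshCoeff _root_.expect
  have step : ∀ S : Finset (Fin n),
      (∑ ω' : Fin n → Bool, f ω' * walsh S ω') / 2 ^ n * walsh S ω
        = (∑ ω' : Fin n → Bool, f ω' * (walsh S ω' * walsh S ω)) / 2 ^ n := by
    intro S; rw [div_mul_eq_mul_div, Finset.sum_mul]; congr 1
    exact Finset.sum_congr rfl fun ω' _ => by ring
  rw [Finset.sum_congr rfl fun S _ => step S, ← Finset.sum_div, Finset.sum_comm]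
  have h2 : ∀ ω' : Fin n → Bool,
      ∑ S : Finset (Fin n), f ω' * (walsh S ω' * walsh S ω)
        = if ω' = ω then f ω' * (2:ℝ)^n else 0 := by
    intro ω'; rw [← Finset.mul_sum, walsh_dual, mul_ite, mul_zero]
  rw [Finset.sum_congr rfl fun ω' _ => h2 ω', Finset.sum_ite_eq' Finset.univ ω
    (fun ω' => f ω' * (2:ℝ)^n), if_pos (Finset.mem_univ ω)]
  field_simp

lemma kernel_walsh {n : ℕ} (ε : ℝ) (S : Finset (Fin n)) (ω : Fin n → Bool) :
    ∑ ω' : Fin n → Bool, noiseKernel ε ω ω' * walsh S ω' =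
      (1 - ε) ^ S.card * walsh S ω := by
  have hw : ∀ ω' : Fin n → Bool, noiseKernel ε ω ω' * walsh S ω'
      = ∏ i, ((if ω i = ω' i then 1 - ε / 2 else ε / 2) *
          (if i ∈ S then (if ω' i then (-1:ℝ) else 1) else 1)) := by
    intro ω'
    rw [noiseKernel, walsh, Finset.prod_mul_distrib]
    congr 1
    rw [Finset.prod_ite_mem, Finset.univ_inter]
  simp_rw [hw]
  rw [sum_pi_bool (fun i b => (if ω i = b then 1 - ε / 2 else ε / 2) *
          (if i ∈ S then (if b then (-1:ℝ) else 1) else 1))]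
  simp only [reduceIte, Bool.false_eq_true, if_false]
  have : ∀ i : Fin n,
      ((if ω i = true then 1 - ε / 2 else ε / 2) * (if i ∈ S then (-1:ℝ) else 1)
        + (if ω i = false then 1 - ε / 2 else ε / 2) * (if i ∈ S then (1:ℝ) else 1))
      = if i ∈ S then (1 - ε) * (if ω i then (-1:ℝ) else 1) else 1 := by
    intro i
    by_cases hi : i ∈ S <;> by_cases hb : ω i <;> simp [hi, hb] <;> ring
  rw [Finset.prod_congr rfl (fun i _ => this i), Finset.prod_ite_mem, Finset.univ_inter,
    Finset.prod_mul_distrib, Finset.prod_const, walsh]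

lemma noiseE_eq {n : ℕ} (ε : ℝ) (f : (Fin n → Bool) → ℝ) :
    noiseE ε f f = ∑ S : Finset (Fin n), (1 - ε) ^ S.card * walshCoeff f S ^ 2 := by
  unfold noiseE
  have h1 : ∀ ω : Fin n → Bool,
      ∑ ω' : Fin n → Bool, noiseKernel ε ω ω' * f ω * f ω'
        = f ω * ∑ S : Finset (Fin n), walshCoeff f S * ((1 - ε) ^ S.card * walsh S ω) := by
    intro ω
    have : ∀ ω' : Fin n → Bool, f ω' = ∑ S : Finset (Fin n), walshCoeff f S * walsh S ω' :=
      fun ω' => (fourier_inversion f ω').symm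
    calc ∑ ω' : Fin n → Bool, noiseKernel ε ω ω' * f ω * f ω'
        = f ω * ∑ ω' : Fin n → Bool, noiseKernel ε ω ω' *
            ∑ S : Finset (Fin n), walshCoeff f S * walsh S ω' := by
          rw [Finset.mul_sum]
          exact Finset.sum_congr rfl fun ω' _ => by rw [← this ω']; ring
      _ = f ω * ∑ ω' : Fin n → Bool, ∑ S : Finset (Fin n),
            walshCoeff f S * (noiseKernel ε ω ω' * walsh S ω') := by
          congr 1
          exact Finset.sum_congr rfl fun ω' _ => by
            rw [Finset.mul_sum]; exact Finset.sum_congr rfl fun S _ => by ring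
      _ = f ω * ∑ S : Finset (Fin n), walshCoeff f S * ((1 - ε) ^ S.card * walsh S ω) := by
          rw [Finset.sum_comm]
          congr 1
          exact Finset.sum_congr rfl fun S _ => by rw [← Finset.mul_sum, kernel_walsh]
  rw [Finset.sum_congr rfl fun ω _ => h1 ω]
  have h2 : ∀ ω : Fin n → Bool,
      f ω * ∑ S : Finset (Fin n), walshCoeff f S * ((1 - ε) ^ S.card * walsh S ω)
        = ∑ S : Finset (Fin n), (1 - ε) ^ S.card * walshCoeff f S * (f ω * walsh S ω) := by
    intro ω; rw [Finset.mul_sum]; exact Finset.sum_congr rfl fun S _ => by ring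
  rw [Finset.sum_congr rfl fun ω _ => h2 ω, Finset.sum_comm, Finset.sum_div]
  exact Finset.sum_congr rfl fun S _ => by
    rw [← Finset.mul_sum, mul_div_assoc]
    rw [show ((∑ i : Fin n → Bool, f i * walsh S i)/2^n : ℝ)
      = _root_.expect fun ω => f ω * walsh S ω from rfl, walshCoeff]; ring

lemma expect_eq_coeff {n : ℕ} (f : (Fin n → Bool) → ℝ) :
    walshCoeff f ∅ = expect f := by
  unfold walshCoeff
  congr 1; funext ω; simp [walsh]

lemma parseval_one {n : ℕ} (f : (Fin n → Bool) → ℝ) (hb : ∀ ω, f ω = 1 ∨ f ω = -1) :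
    ∑ S : Finset (Fin n), walshCoeff f S ^ 2 = 1 := by
  have h0 : noiseE 0 f f = 1 := by
    unfold noiseE noiseKernel
    have : ∀ ω ω' : Fin n → Bool,
        (∏ i, (if ω i = ω' i then 1 - (0:ℝ) / 2 else 0 / 2)) * f ω * f ω'
          = if ω' = ω then f ω * f ω' else 0 := by
      intro ω ω'
      by_cases h : ω' = ω
      · subst h; simp
      · obtain ⟨i, hi⟩ : ∃ i, ω i ≠ ω' i := by
          by_contra hc; push_neg at hc; exact h (funext fun i => (hc i).symm)
        rw [Finset.prod_eq_zero (Finset.mem_univ i) (by simp [hi]), if_neg h]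
        ring
    simp_rw [this]
    have : ∀ ω : Fin n → Bool, ∑ ω' : Fin n → Bool, (if ω' = ω then f ω * f ω' else 0) = 1 := by
      intro ω
      rw [Finset.sum_ite_eq' Finset.univ ω (fun ω' => f ω * f ω'), if_pos (Finset.mem_univ ω)]
      rcases hb ω with h | h <;> rw [h] <;> norm_num
    rw [Finset.sum_congr rfl fun ω _ => this ω, Finset.sum_const]
    simp
  calc ∑ S : Finset (Fin n), walshCoeff f S ^ 2
      = ∑ S : Finset (Fin n), (1-(0:ℝ))^S.card * walshCoeff f S^2 :=
        Finset.sum_congr rfl fun S _ => by norm_num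
    _ = noiseE 0 f f := (noiseE_eq 0 f).symm
    _ = 1 := h0

lemma cov_eq {n : ℕ} (ε : ℝ) (f : (Fin n → Bool) → ℝ) :
    noiseE ε f f - expect f ^ 2 =
      ∑ S : Finset (Fin n), (if S ≠ ∅ then (1 - ε) ^ S.card * walshCoeff f S ^ 2 else 0) := by
  rw [noiseE_eq, ← expect_eq_coeff]
  rw [← Finset.add_sum_erase Finset.univ _ (Finset.mem_univ (∅ : Finset (Fin n))),
    ← Finset.add_sum_erase Finset.univ
      (fun S => if S ≠ ∅ then (1 - ε) ^ S.card * walshCoeff f S ^ 2 else 0)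
      (Finset.mem_univ (∅ : Finset (Fin n)))]
  simp only [Finset.card_empty, pow_zero, one_mul, ne_eq, not_true_eq_false, if_false]
  rw [add_sub_cancel_left, zero_add]
  exact Finset.sum_congr rfl fun S hS => by
    rw [if_pos (Finset.ne_of_mem_erase hS)]


/-- If I(f_n) ≥ c n^ρ and the spectral samples have uniformly small lower tails
(below any small multiple of their means), then for every 0 < α < ρ and
ε_n = n^{-α} the noise covariance tends to 0 (so SENS({f_n}) ≥ ρ). -/
theorem spectral_tightness_implies_sensitivity
    {m : ℕ → ℕ} (f : ∀ n, (Fin (m n) → Bool) → ℝ)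
    (hb : ∀ n ω, f n ω = 1 ∨ f n ω = -1)
    (c ρ : ℝ) (hc : 0 < c) (hρ : 0 < ρ)
    (hI : ∀ n : ℕ, c * (n : ℝ) ^ ρ ≤ totalInfluence (f n))
    (htight : ∀ γ : ℝ, 0 < γ → ∃ δ : ℝ, 0 < δ ∧ ∀ n : ℕ,
      (∑ S : Finset (Fin (m n)),
        if S ≠ ∅ ∧ (S.card : ℝ) < δ * totalInfluence (f n)
        then walshCoeff (f n) S ^ 2 else 0) < γ)
    (α : ℝ) (hα0 : 0 < α) (hα : α < ρ) :
    Filter.Tendsto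
      (fun n : ℕ => noiseE ((n : ℝ) ^ (-α)) (f n) (f n) - expect (f n) ^ 2)
      Filter.atTop (nhds 0) := by

  rw [Metric.tendsto_atTop]
  intro γ hγ
  obtain ⟨δ, hδ, htail⟩ := htight (γ / 2) (half_pos hγ)
  have hKto : Filter.Tendsto (fun n : ℕ => Real.exp (-(δ * c * (n : ℝ) ^ (ρ - α))))
      Filter.atTop (nhds 0) := by
    apply Real.tendsto_exp_atBot.comp
    apply Filter.tendsto_neg_atTop_atBot.comp
    apply Filter.Tendsto.const_mul_atTop (by positivity : (0:ℝ) < δ * c)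
    exact (tendsto_rpow_atTop (by linarith)).comp tendsto_natCast_atTop_atTop
  obtain ⟨N1, hN1⟩ := (Metric.tendsto_atTop.1 hKto) (γ / 2) (half_pos hγ)
  refine ⟨max N1 2, fun n hn => ?_⟩
  have hn1 : N1 ≤ n := le_trans (le_max_left _ _) hn
  have hn2 : (2:ℝ) ≤ (n:ℝ) := by
    have : (2:ℕ) ≤ n := le_trans (le_max_right _ _) hn
    exact_mod_cast this
  have hnpos : (0:ℝ) < (n:ℝ) := by linarith
  set ε : ℝ := (n : ℝ) ^ (-α) with hεdef
  have hε0 : 0 ≤ ε := Real.rpow_nonneg hnpos.le _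
  have hε1 : ε < 1 := Real.rpow_lt_one_of_one_lt_of_neg (by linarith) (by linarith)
  have hbase : 0 < 1 - ε := by linarith
  have hbase1 : 1 - ε ≤ 1 := by linarith
  set I : ℝ := totalInfluence (f n) with hIdef
  have hIn : c * (n:ℝ) ^ ρ ≤ I := hI n
  have hnρ : (0:ℝ) < (n:ℝ) ^ ρ := Real.rpow_pos_of_pos hnpos _
  set K : ℝ := Real.exp (-(δ * c * (n : ℝ) ^ (ρ - α))) with hKdef
  have hK0 : 0 < K := Real.exp_pos _
  -- per-term bound
  have hterm : ∀ S : Finset (Fin (m n)),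
      (if S ≠ ∅ then (1 - ε) ^ S.card * walshCoeff (f n) S ^ 2 else 0)
        ≤ (if S ≠ ∅ ∧ (S.card : ℝ) < δ * I then walshCoeff (f n) S ^ 2 else 0)
          + K * walshCoeff (f n) S ^ 2 := by
    intro S
    have hsq : (0:ℝ) ≤ walshCoeff (f n) S ^ 2 := sq_nonneg _
    by_cases hS : S = (∅ : Finset (Fin (m n)))
    · simp only [hS, ne_eq, not_true_eq_false, false_and, if_false]
      positivity
    · rw [if_pos hS]
      by_cases hsmall : (S.card : ℝ) < δ * I
      · rw [if_pos ⟨hS, hsmall⟩]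
        have : (1 - ε) ^ S.card ≤ 1 := pow_le_one₀ hbase.le hbase1
        nlinarith
      · rw [if_neg (by tauto), zero_add]
        have hge : δ * c * (n:ℝ) ^ ρ ≤ (S.card : ℝ) := by
          push_neg at hsmall
          calc δ * c * (n:ℝ) ^ ρ = δ * (c * (n:ℝ)^ρ) := by ring
            _ ≤ δ * I := by exact mul_le_mul_of_nonneg_left hIn hδ.le
            _ ≤ (S.card : ℝ) := hsmall
        have h1 : (1 - ε) ^ S.card ≤ K := by
          have e1 : (1 - ε) ^ S.card = (1 - ε) ^ ((S.card : ℝ)) :=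
            (Real.rpow_natCast _ _).symm
          have e2 : (1 - ε) ^ ((S.card : ℝ)) ≤ (1 - ε) ^ (δ * c * (n:ℝ) ^ ρ) :=
            Real.rpow_le_rpow_of_exponent_ge hbase hbase1 hge
          have e3 : (1 - ε) ^ (δ * c * (n:ℝ) ^ ρ) ≤ (Real.exp (-ε)) ^ (δ * c * (n:ℝ) ^ ρ) := by
            apply Real.rpow_le_rpow hbase.le _ (by positivity)
            have := Real.add_one_le_exp (-ε); linarith
          have e4 : (Real.exp (-ε)) ^ (δ * c * (n:ℝ) ^ ρ) = K := by
            rw [← Real.exp_mul, hKdef]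
            congr 1
            rw [hεdef]
            rw [show ρ - α = -α + ρ by ring, Real.rpow_add hnpos]
            ring
          rw [e1]; rw [e4] at e3; exact le_trans e2 e3
        nlinarith
  -- sum
  have hsum : noiseE ε (f n) (f n) - expect (f n) ^ 2 < γ := by
    rw [cov_eq]
    calc ∑ S : Finset (Fin (m n)), (if S ≠ ∅ then (1 - ε) ^ S.card * walshCoeff (f n) S ^ 2 else 0)
        ≤ ∑ S : Finset (Fin (m n)),
            ((if S ≠ ∅ ∧ (S.card : ℝ) < δ * I then walshCoeff (f n) S ^ 2 else 0)
              + K * walshCoeff (f n) S ^ 2) := Finset.sum_le_sum fun S _ => hterm S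
      _ = (∑ S : Finset (Fin (m n)),
            (if S ≠ ∅ ∧ (S.card : ℝ) < δ * I then walshCoeff (f n) S ^ 2 else 0))
          + K * ∑ S : Finset (Fin (m n)), walshCoeff (f n) S ^ 2 := by
            rw [Finset.sum_add_distrib, Finset.mul_sum]
      _ = (∑ S : Finset (Fin (m n)),
            (if S ≠ ∅ ∧ (S.card : ℝ) < δ * I then walshCoeff (f n) S ^ 2 else 0)) + K := by
            rw [parseval_one (f n) (hb n), mul_one]
      _ < γ / 2 + γ / 2 := by
            apply add_lt_add (htail n)
            have := hN1 n hn1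
            rw [Real.dist_eq, sub_zero, abs_of_pos hK0] at this
            exact this
      _ = γ := by ring
  have hnonneg : 0 ≤ noiseE ε (f n) (f n) - expect (f n) ^ 2 := by
    rw [cov_eq]
    apply Finset.sum_nonneg
    intro S _
    by_cases hS : S = (∅ : Finset (Fin (m n)))
    · simp [hS]
    · rw [if_pos hS]; positivity
  rw [Real.dist_eq, sub_zero, abs_of_nonneg hnonneg]
  exact hsum
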